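/- If Σ₂ is an all-positive signed graph, then the balancing dimension of the BCD-lexicographic product Σ₁*Σ₂ equals the balancing dimension of Σ₁. -/

import Mathlib

open Finset
open scoped Classical

/-- A signed graph: a simple graph together with a ±1 sign on each edge. -/
structure SGraph (V : Type*) where
  G : SimpleGraph V
  sign : V → V → ℤ
  sign_symm : ∀ u v, sign u v = sign v u
  sign_mem : ∀ u v, G.Adj u v → sign u v = 1 ∨ sign u v = -1

variable {V V1 V2 W : Type*}

/-- `ζ` is a positive k-switching function for the signed graph `S`. -/
def IsPosSwitching [Fintype V] (S : SGraph V) (k : ℕ) (ζ : V → Fin k → ℤ) : Prop :=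
  (∀ v i, ζ v i = -1 ∨ ζ v i = 0 ∨ ζ v i = 1) ∧
  (∀ u v, S.G.Adj u v → (∑ i, ζ u i * ζ v i) ≠ 0) ∧
  (∀ u v, S.G.Adj u v → S.sign u v * Int.sign (∑ i, ζ u i * ζ v i) = 1)

def HasPosSwitching [Fintype V] (S : SGraph V) (k : ℕ) : Prop :=
  ∃ ζ : V → Fin k → ℤ, IsPosSwitching S k ζ

/-- The balancing dimension: least `k ≥ 1` admitting a positive k-switching function. -/
noncomputable def bdim [Fintype V] (S : SGraph V) : ℕ :=
  sInf {k | 1 ≤ k ∧ HasPosSwitching S k}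

/-- A signed graph is balanced iff it can be switched to all-positive by a 1-switching. -/
def SGraph.Balanced [Fintype V] (S : SGraph V) : Prop := HasPosSwitching S 1

/-- The negation of a signed graph. -/
def SGraph.neg (S : SGraph V) : SGraph V where
  G := S.G
  sign := fun u v => - S.sign u v
  sign_symm := fun u v => by (try dsimp only); rw [S.sign_symm]
  sign_mem := fun u v h => by rcases S.sign_mem u v h with h1 | h1 <;> simp [h1]

def SGraph.Antibalanced [Fintype V] (S : SGraph V) : Prop := S.neg.Balanced

/-- Switching equivalence of signed graphs. -/
def SwitchEquiv (S1 S2 : SGraph V) : Prop :=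
  S1.G = S2.G ∧ ∃ η : V → ℤ, (∀ v, η v = 1 ∨ η v = -1) ∧
    ∀ u v, S1.G.Adj u v → S2.sign u v = η u * S1.sign u v * η v

/-- The Cartesian product of signed graphs. -/
noncomputable def cartProd (S1 : SGraph V1) (S2 : SGraph V2) : SGraph (V1 × V2) where
  G := S1.G □ S2.G
  sign := fun p q => if p.2 = q.2 then S1.sign p.1 q.1 else S2.sign p.2 q.2
  sign_symm := by
    intro u v
    try dsimp only
    rcases eq_or_ne u.2 v.2 with h | h
    · rw [if_pos h, if_pos h.symm, S1.sign_symm]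
    · rw [if_neg h, if_neg (Ne.symm h), S2.sign_symm]
  sign_mem := by
    intro u v h
    try dsimp only
    rcases (SimpleGraph.boxProd_adj.mp h) with ⟨h1, h2⟩ | ⟨h1, h2⟩
    · rw [if_pos h2]; exact S1.sign_mem _ _ h1
    · rw [if_neg h1.ne]; exact S2.sign_mem _ _ h1
/-- The HG-lexicographic product of signed graphs. -/
noncomputable def lexHG (S1 : SGraph V1) (S2 : SGraph V2) : SGraph (V1 × V2) where
  G := { Adj := fun p q => S1.G.Adj p.1 q.1 ∨ (p.1 = q.1 ∧ S2.G.Adj p.2 q.2)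
         symm := by
           refine ⟨?_⟩; rintro p q (h | ⟨h1, h2⟩)
           · exact Or.inl h.symm
           · exact Or.inr ⟨h1.symm, h2.symm⟩
         loopless := by
           refine ⟨?_⟩; rintro p (h | ⟨_, h⟩)
           · exact S1.G.irrefl h
           · exact S2.G.irrefl h }
  sign := fun p q => if p.1 = q.1 then S2.sign p.2 q.2 else S1.sign p.1 q.1
  sign_symm := by
    intro u v
    try dsimp only
    rcases eq_or_ne u.1 v.1 with h | h
    · rw [if_pos h, if_pos h.symm, S2.sign_symm]
    · rw [if_neg h, if_neg (Ne.symm h), S1.sign_symm]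
  sign_mem := by
    rintro p q (h | ⟨h1, h2⟩)
    · (try dsimp only); rw [if_neg h.ne]; exact S1.sign_mem _ _ h
    · (try dsimp only); rw [if_pos h1]; exact S2.sign_mem _ _ h2

/-- The BCD-lexicographic product of signed graphs. -/
noncomputable def lexBCD (S1 : SGraph V1) (S2 : SGraph V2) : SGraph (V1 × V2) where
  G := { Adj := fun p q => S1.G.Adj p.1 q.1 ∨ (p.1 = q.1 ∧ S2.G.Adj p.2 q.2)
         symm := by
           refine ⟨?_⟩; rintro p q (h | ⟨h1, h2⟩)
           · exact Or.inl h.symm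
           · exact Or.inr ⟨h1.symm, h2.symm⟩
         loopless := by
           refine ⟨?_⟩; rintro p (h | ⟨_, h⟩)
           · exact S1.G.irrefl h
           · exact S2.G.irrefl h }
  sign := fun p q =>
    if S2.G.Adj p.2 q.2 then
      (if S1.G.Adj p.1 q.1 then S1.sign p.1 q.1 * S2.sign p.2 q.2 else S2.sign p.2 q.2)
    else S1.sign p.1 q.1
  sign_symm := by
    intro u v
    try dsimp only
    rw [S1.G.adj_comm v.1 u.1, S2.G.adj_comm v.2 u.2, S1.sign_symm v.1 u.1,
      S2.sign_symm v.2 u.2]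
  sign_mem := by
    rintro p q (h | ⟨h1, h2⟩) <;> try dsimp only
    · by_cases h2 : S2.G.Adj p.2 q.2
      · rw [if_pos h2, if_pos h]
        rcases S1.sign_mem _ _ h with e1 | e1 <;> rcases S2.sign_mem _ _ h2 with e2 | e2 <;>
          simp [e1, e2]
      · rw [if_neg h2]; exact S1.sign_mem _ _ h
    · rw [if_pos h2, if_neg (h1 ▸ S1.G.irrefl)]
      exact S2.sign_mem _ _ h2

/-- The tensor product of signed graphs. -/
def tensorProd (S1 : SGraph V1) (S2 : SGraph V2) : SGraph (V1 × V2) where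
  G := { Adj := fun p q => S1.G.Adj p.1 q.1 ∧ S2.G.Adj p.2 q.2
         symm := ⟨fun p q ⟨h1, h2⟩ => ⟨h1.symm, h2.symm⟩⟩
         loopless := ⟨fun p ⟨h1, _⟩ => S1.G.irrefl h1⟩ }
  sign := fun p q => S1.sign p.1 q.1 * S2.sign p.2 q.2
  sign_symm := by
    intro u v
    try dsimp only
    rw [S1.sign_symm, S2.sign_symm]
  sign_mem := by
    rintro p q ⟨h1, h2⟩
    try dsimp only
    rcases S1.sign_mem _ _ h1 with e1 | e1 <;> rcases S2.sign_mem _ _ h2 with e2 | e2 <;>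
      simp [e1, e2]

/-- The strong product of signed graphs. -/
noncomputable def strongProd (S1 : SGraph V1) (S2 : SGraph V2) : SGraph (V1 × V2) where
  G := { Adj := fun p q => (S1.G.Adj p.1 q.1 ∧ p.2 = q.2) ∨ (p.1 = q.1 ∧ S2.G.Adj p.2 q.2) ∨
           (S1.G.Adj p.1 q.1 ∧ S2.G.Adj p.2 q.2)
         symm := by
           refine ⟨?_⟩; rintro p q (⟨h1, h2⟩ | ⟨h1, h2⟩ | ⟨h1, h2⟩)
           · exact Or.inl ⟨h1.symm, h2.symm⟩
           · exact Or.inr (Or.inl ⟨h1.symm, h2.symm⟩)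
           · exact Or.inr (Or.inr ⟨h1.symm, h2.symm⟩)
         loopless := by
           refine ⟨?_⟩; rintro p (⟨h1, _⟩ | ⟨_, h2⟩ | ⟨h1, _⟩)
           · exact S1.G.irrefl h1
           · exact S2.G.irrefl h2
           · exact S1.G.irrefl h1 }
  sign := fun p q =>
    if p.1 = q.1 then S2.sign p.2 q.2
    else if p.2 = q.2 then S1.sign p.1 q.1
    else S1.sign p.1 q.1 * S2.sign p.2 q.2
  sign_symm := by
    intro u v
    try dsimp only
    rcases eq_or_ne u.1 v.1 with h | h
    · rw [if_pos h, if_pos h.symm, S2.sign_symm]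
    · rw [if_neg h, if_neg (Ne.symm h)]
      rcases eq_or_ne u.2 v.2 with h' | h'
      · rw [if_pos h', if_pos h'.symm, S1.sign_symm]
      · rw [if_neg h', if_neg (Ne.symm h'), S1.sign_symm, S2.sign_symm]
  sign_mem := by
    rintro p q (⟨h1, h2⟩ | ⟨h1, h2⟩ | ⟨h1, h2⟩) <;> try dsimp only
    · rw [if_neg h1.ne, if_pos h2]; exact S1.sign_mem _ _ h1
    · rw [if_pos h1]; exact S2.sign_mem _ _ h2
    · rw [if_neg h1.ne, if_neg h2.ne]
      rcases S1.sign_mem _ _ h1 with e1 | e1 <;> rcases S2.sign_mem _ _ h2 with e2 | e2 <;>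
        simp [e1, e2]
/-- The cycle on `ZMod n` (vertices `0,1,…,n-1`) with the single negative edge `{0,1}`. -/
noncomputable def Cneg (n : ℕ) : SGraph (ZMod n) where
  G := { Adj := fun i j => i ≠ j ∧ (i - j = 1 ∨ j - i = 1)
         symm := ⟨fun i j ⟨h1, h2⟩ => ⟨h1.symm, h2.symm⟩⟩
         loopless := ⟨fun i ⟨h1, _⟩ => h1 rfl⟩ }
  sign := fun i j => if (i = 0 ∧ j = 1) ∨ (i = 1 ∧ j = 0) then -1 else 1
  sign_symm := by
    intro u v
    try dsimp only
    exact if_congr (by tauto) rfl rfl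
  sign_mem := by
    intro u v _
    try dsimp only
    by_cases h : (u = 0 ∧ v = 1) ∨ (u = 1 ∧ v = 0)
    · rw [if_pos h]; exact Or.inr rfl
    · rw [if_neg h]; exact Or.inl rfl

/-- The all-negative complete signed graph on `n` vertices. -/
def Kneg (n : ℕ) : SGraph (Fin n) where
  G := ⊤
  sign := fun _ _ => -1
  sign_symm := fun _ _ => rfl
  sign_mem := fun _ _ _ => Or.inr rfl

/-- The edgeless signed graph on `k` vertices. -/
def Nk (k : ℕ) : SGraph (Fin k) where
  G := ⊥
  sign := fun _ _ => 1
  sign_symm := fun _ _ => rfl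
  sign_mem := fun _ _ h => (h.elim)

/-- The lexicographic product of simple graphs. -/
def lexProdGraph (G : SimpleGraph V1) (H : SimpleGraph V2) : SimpleGraph (V1 × V2) where
  Adj p q := G.Adj p.1 q.1 ∨ (p.1 = q.1 ∧ H.Adj p.2 q.2)
  symm := by
    refine ⟨?_⟩; rintro p q (h | ⟨h1, h2⟩)
    · exact Or.inl h.symm
    · exact Or.inr ⟨h1.symm, h2.symm⟩
  loopless := by
    refine ⟨?_⟩; rintro p (h | ⟨_, h⟩)
    · exact G.irrefl h
    · exact H.irrefl h

theorem stmt15 [Fintype V1] [Fintype V2] [Nonempty V2] (S1 : SGraph V1) (S2 : SGraph V2)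
    (h2 : ∀ u v, S2.G.Adj u v → S2.sign u v = 1) :
    bdim (lexBCD S1 S2) = bdim S1 := by
  have hAdj : ∀ p q : V1 × V2, (lexBCD S1 S2).G.Adj p q ↔
      (S1.G.Adj p.1 q.1 ∨ (p.1 = q.1 ∧ S2.G.Adj p.2 q.2)) := fun p q => Iff.rfl
  unfold bdim
  congr 1
  ext k
  simp only [Set.mem_setOf_eq]
  constructor
  · rintro ⟨hk, ζ, hvals, hnz, hsgn⟩
    obtain ⟨w0⟩ := ‹Nonempty V2›
    refine ⟨hk, fun v => ζ (v, w0), fun v i => hvals _ i, ?_, ?_⟩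
    · intro u v h
      exact hnz (u, w0) (v, w0) (Or.inl h)
    · intro u v h
      have hs := hsgn (u, w0) (v, w0) (Or.inl h)
      have : (lexBCD S1 S2).sign (u, w0) (v, w0) = S1.sign u v := by
        simp [lexBCD, SimpleGraph.irrefl]
      rwa [this] at hs
  · rintro ⟨hk, ζ, hvals, hnz, hsgn⟩
    set i0 : Fin k := ⟨0, hk⟩ with hi0
    set ζ' : V1 → Fin k → ℤ :=
      fun v => if ∀ i, ζ v i = 0 then (fun i => if i = i0 then 1 else 0) else ζ v with hζ'
    have hvals' : ∀ v i, ζ' v i = -1 ∨ ζ' v i = 0 ∨ ζ' v i = 1 := by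
      intro v i
      by_cases h : ∀ i, ζ v i = 0
      · simp only [hζ', if_pos h]
        by_cases hi : i = i0 <;> simp [hi]
      · simp only [hζ', if_neg h]; exact hvals v i
    have hedge : ∀ u v, S1.G.Adj u v → ζ' u = ζ u ∧ ζ' v = ζ v := by
      intro u v h
      constructor
      · have : ¬ ∀ i, ζ u i = 0 := fun hz => hnz u v h (by simp [hz])
        simp [hζ', this]
      · have : ¬ ∀ i, ζ v i = 0 := fun hz => hnz u v h (by simp [hz])
        simp [hζ', this]
    have hself : ∀ v, 0 < ∑ i, ζ' v i * ζ' v i := by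
      intro v
      have hex : ∃ i, ζ' v i ≠ 0 := by
        by_cases h : ∀ i, ζ v i = 0
        · exact ⟨i0, by simp [hζ', h]⟩
        · have hne := h
          push_neg at h
          obtain ⟨i, hi⟩ := h
          refine ⟨i, ?_⟩
          simp only [hζ', if_neg hne]
          exact hi
      obtain ⟨i, hi⟩ := hex
      refine Finset.sum_pos' (fun j _ => mul_self_nonneg _) ⟨i, Finset.mem_univ i, ?_⟩
      have := mul_self_pos.mpr hi
      exact this
    refine ⟨hk, fun p => ζ' p.1, fun p i => hvals' p.1 i, ?_, ?_⟩
    · rintro p q (h | ⟨h1, _⟩)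
      · obtain ⟨hu, hv⟩ := hedge _ _ h
        show (∑ i, ζ' p.1 i * ζ' q.1 i) ≠ 0
        rw [hu, hv]; exact hnz _ _ h
      · show (∑ i, ζ' p.1 i * ζ' q.1 i) ≠ 0
        rw [h1]; exact (hself q.1).ne'
    · rintro p q (h | ⟨h1, hA2⟩)
      · obtain ⟨hu, hv⟩ := hedge _ _ h
        show (lexBCD S1 S2).sign p q * Int.sign (∑ i, ζ' p.1 i * ζ' q.1 i) = 1
        rw [hu, hv]
        have hs := hsgn _ _ h
        have : (lexBCD S1 S2).sign p q = S1.sign p.1 q.1 := by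
          by_cases hA : S2.G.Adj p.2 q.2
          · simp [lexBCD, hA, h, h2 _ _ hA]
          · simp [lexBCD, hA]
        rw [this]; exact hs
      · have hsign : (lexBCD S1 S2).sign p q = 1 := by
          have : ¬ S1.G.Adj p.1 q.1 := h1 ▸ S1.G.irrefl
          simp [lexBCD, hA2, this, h2 _ _ hA2]
        show (lexBCD S1 S2).sign p q * Int.sign (∑ i, ζ' p.1 i * ζ' q.1 i) = 1
        rw [hsign, h1, one_mul, Int.sign_eq_one_iff_pos]
        exact hself q.1
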